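/- Suppose the CutWidth W satisfies W ≥ Δ, and let A be a nonempty bag with 0 < γ(A) < W. Then there exists an (A–∅)-crusade ω̂ = (ω̂₀, …, ω̂_k) of width z(ω̂) = γ(A) with the following properties: (i) ω̂_i ≠ ω̂_{i−1} for all i ∈ {1, …, k}; (ii) ω̂_i ⊊ ω̂_{i−1} for all i ∈ {2, …, k}; (iii) γ(ω̂_i) ≤ γ(A) for all i ∈ {0, …, k}; (iv) γ(ω̂₁) ≥ γ(A) − Δ; (v) c(A) ≥ c(ω̂₁) − Δ·(E + 2), i.e., c(A) + (n + 4)·Δ ≥ c(ω̂₁) + 2W; and (vi) there exists an index l ∈ {0, …, k} such that ω̂_l is an improvement bag. -/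

import Mathlib

open Finset

variable {V : Type*} [Fintype V] [DecidableEq V]

/-- The cut of a bag `A`: the number of edges of `G` with exactly one endpoint in `A`. -/
def cut (G : SimpleGraph V) [DecidableRel G.Adj] (A : Finset V) : ℕ :=
  ((A ×ˢ Aᶜ).filter fun p => G.Adj p.1 p.2).card

/-- An `(A–B)`-crusade of length `k+1`: a sequence of bags starting at `A`, ending at `B`,
removing at most one node at each step. -/
def IsCrusade (A B : Finset V) (k : ℕ) (ω : ℕ → Finset V) : Prop :=
  ω 0 = A ∧ ω k = B ∧ ∀ i < k, (ω i \ ω (i + 1)).card ≤ 1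

/-- The width of a crusade: the maximum cut encountered after the first bag. -/
def width (G : SimpleGraph V) [DecidableRel G.Adj] (k : ℕ) (ω : ℕ → Finset V) : ℕ :=
  (Finset.Icc 1 k).sup fun i => cut G (ω i)

/-- The resilience of a bag `A`: the minimum width over all `(A–∅)`-crusades. -/
noncomputable def resilience (G : SimpleGraph V) [DecidableRel G.Adj] (A : Finset V) : ℕ :=
  sInf {w | ∃ (k : ℕ) (ω : ℕ → Finset V), IsCrusade A ∅ k ω ∧ width G k ω = w}

/-- A crusade is monotone if each bag contains the next. -/
def IsMonotone (k : ℕ) (ω : ℕ → Finset V) : Prop :=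
  ∀ i < k, ω (i + 1) ⊆ ω i

/-- The CutWidth of `G`: the minimum width over all monotone `(V–∅)`-crusades. -/
noncomputable def cutWidth (G : SimpleGraph V) [DecidableRel G.Adj] : ℕ :=
  sInf {w | ∃ (k : ℕ) (ω : ℕ → Finset V),
    IsCrusade Finset.univ ∅ k ω ∧ IsMonotone k ω ∧ width G k ω = w}

section helpers

set_option linter.unusedSectionVars false
variable (G : SimpleGraph V) [DecidableRel G.Adj]

lemma cut_empty : cut G ∅ = 0 := by
  simp [cut]

lemma cut_le_mul_card (X : Finset V) : cut G X ≤ G.maxDegree * X.card := by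
  rw [cut, Finset.card_eq_sum_card_fiberwise (f := Prod.fst) (t := X)
    (fun p hp => by simp only [mem_coe, mem_filter, mem_product] at hp; exact hp.1.1)]
  calc ∑ a ∈ X, #(filter (fun p => p.1 = a) ((X ×ˢ Xᶜ).filter fun p => G.Adj p.1 p.2))
      ≤ ∑ _a ∈ X, G.maxDegree := by
        refine Finset.sum_le_sum fun a _ => ?_
        refine le_trans (Finset.card_le_card_of_injOn (t := G.neighborFinset a)
          (fun p => p.2) ?_ ?_) ?_
        · intro p hp
          simp only [mem_coe, mem_filter, mem_product] at hp
          simp only [mem_coe, SimpleGraph.mem_neighborFinset]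
          exact hp.2 ▸ hp.1.2
        · intro p hp q hq h
          simp only [coe_filter, Set.mem_setOf_eq] at hp hq
          exact Prod.ext (hp.2.trans hq.2.symm) h
        · rw [SimpleGraph.card_neighborFinset_eq_degree]
          exact G.degree_le_maxDegree a
    _ = G.maxDegree * X.card := by rw [Finset.sum_const, smul_eq_mul, mul_comm]

lemma cut_le_mul_card_compl (X : Finset V) : cut G X ≤ G.maxDegree * Xᶜ.card := by
  rw [cut, Finset.card_eq_sum_card_fiberwise (f := Prod.snd) (t := Xᶜ)
    (fun p hp => by simp only [mem_coe, mem_filter, mem_product] at hp; exact hp.1.2)]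
  calc ∑ b ∈ Xᶜ, #(filter (fun p => p.2 = b) ((X ×ˢ Xᶜ).filter fun p => G.Adj p.1 p.2))
      ≤ ∑ _b ∈ Xᶜ, G.maxDegree := by
        refine Finset.sum_le_sum fun b _ => ?_
        refine le_trans (Finset.card_le_card_of_injOn (t := G.neighborFinset b)
          (fun p => p.1) ?_ ?_) ?_
        · intro p hp
          simp only [mem_coe, mem_filter, mem_product] at hp
          simp only [mem_coe, SimpleGraph.mem_neighborFinset]
          exact (hp.2 ▸ hp.1.2 : G.Adj p.1 b).symm
        · intro p hp q hq h
          simp only [coe_filter, Set.mem_setOf_eq] at hp hq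
          exact Prod.ext h (hp.2.trans hq.2.symm)
        · rw [SimpleGraph.card_neighborFinset_eq_degree]
          exact G.degree_le_maxDegree b
    _ = G.maxDegree * Xᶜ.card := by rw [Finset.sum_const, smul_eq_mul, mul_comm]

lemma card_adj_pairs_left_le (a : V) (s : Finset V) :
    #(filter (fun p => G.Adj p.1 p.2) ({a} ×ˢ s)) ≤ G.maxDegree := by
  refine le_trans (Finset.card_le_card_of_injOn (t := G.neighborFinset a)
    (fun p => p.2) ?_ ?_) ?_
  · intro p hp
    simp only [mem_coe, mem_filter, mem_product, mem_singleton] at hp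
    simp only [mem_coe, SimpleGraph.mem_neighborFinset]
    exact hp.1.1 ▸ hp.2
  · intro p hp q hq h
    simp only [coe_filter, mem_coe, mem_product, mem_singleton, Set.mem_setOf_eq] at hp hq
    exact Prod.ext (hp.1.1.trans hq.1.1.symm) h
  · rw [SimpleGraph.card_neighborFinset_eq_degree]
    exact G.degree_le_maxDegree a

lemma card_adj_pairs_right_le (a : V) (s : Finset V) :
    #(filter (fun p => G.Adj p.1 p.2) (s ×ˢ {a})) ≤ G.maxDegree := by
  refine le_trans (Finset.card_le_card_of_injOn (t := G.neighborFinset a)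
    (fun p => p.1) ?_ ?_) ?_
  · intro p hp
    simp only [mem_coe, mem_filter, mem_product, mem_singleton] at hp
    simp only [mem_coe, SimpleGraph.mem_neighborFinset]
    exact ((hp.1.2 ▸ hp.2 : G.Adj p.1 a)).symm
  · intro p hp q hq h
    simp only [coe_filter, mem_coe, mem_product, mem_singleton, Set.mem_setOf_eq] at hp hq
    exact Prod.ext h (hp.1.2.trans hq.1.2.symm)
  · rw [SimpleGraph.card_neighborFinset_eq_degree]
    exact G.degree_le_maxDegree a

lemma cut_insert_le (a : V) (X : Finset V) :
    cut G (insert a X) ≤ cut G X + G.maxDegree := by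
  rw [cut, cut]
  refine le_trans (Finset.card_le_card (t :=
      ((X ×ˢ Xᶜ).filter fun p => G.Adj p.1 p.2) ∪
      (({a} ×ˢ (univ : Finset V)).filter fun p => G.Adj p.1 p.2)) ?_)
    (le_trans (Finset.card_union_le _ _) ?_)
  · intro p hp
    simp only [mem_filter, mem_product, mem_compl, mem_insert, mem_union, mem_singleton,
      mem_univ, and_true, true_and] at hp ⊢
    rcases hp.1.1 with h1 | h1
    · exact Or.inr ⟨h1, hp.2⟩
    · exact Or.inl ⟨⟨h1, fun hx => hp.1.2 (Or.inr hx)⟩, hp.2⟩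
  · exact Nat.add_le_add_left (card_adj_pairs_left_le G a _) _

lemma cut_erase_le (a : V) (X : Finset V) :
    cut G (X.erase a) ≤ cut G X + G.maxDegree := by
  rw [cut, cut]
  refine le_trans (Finset.card_le_card (t :=
      ((X ×ˢ Xᶜ).filter fun p => G.Adj p.1 p.2) ∪
      (((univ : Finset V) ×ˢ {a}).filter fun p => G.Adj p.1 p.2)) ?_)
    (le_trans (Finset.card_union_le _ _) ?_)
  · intro p hp
    simp only [mem_filter, mem_product, mem_compl, mem_erase, mem_union, mem_singleton,
      mem_univ, true_and] at hp ⊢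
    by_cases h2 : p.2 = a
    · exact Or.inr ⟨h2, hp.2⟩
    · exact Or.inl ⟨⟨hp.1.1.2, fun hx => hp.1.2 ⟨h2, hx⟩⟩, hp.2⟩
  · exact Nat.add_le_add_left (card_adj_pairs_right_le G a _) _

lemma cut_union_le_left (X S : Finset V) :
    cut G (X ∪ S) ≤ cut G X + G.maxDegree * S.card := by
  induction S using Finset.induction with
  | empty => simp
  | @insert a S ha ih =>
    rw [Finset.union_insert]
    calc cut G (insert a (X ∪ S)) ≤ cut G (X ∪ S) + G.maxDegree := cut_insert_le G a _
      _ ≤ cut G X + G.maxDegree * S.card + G.maxDegree := Nat.add_le_add_right ih _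
      _ = cut G X + G.maxDegree * (insert a S).card := by
          rw [Finset.card_insert_of_notMem ha, Nat.mul_add, Nat.mul_one]; omega

lemma cut_sdiff_le (X S : Finset V) :
    cut G (X \ S) ≤ cut G X + G.maxDegree * S.card := by
  induction S using Finset.induction with
  | empty => simp
  | @insert a S ha ih =>
    have : X \ insert a S = (X \ S).erase a := by
      ext x; simp only [mem_sdiff, mem_erase, mem_insert]; tauto
    rw [this]
    calc cut G ((X \ S).erase a) ≤ cut G (X \ S) + G.maxDegree := cut_erase_le G a _
      _ ≤ cut G X + G.maxDegree * S.card + G.maxDegree := Nat.add_le_add_right ih _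
      _ = cut G X + G.maxDegree * (insert a S).card := by
          rw [Finset.card_insert_of_notMem ha, Nat.mul_add, Nat.mul_one]; omega

lemma cut_le_of_superset {Y X : Finset V} (h : Y ⊆ X) :
    cut G X ≤ cut G Y + G.maxDegree * (X.card - Y.card) := by
  have h1 : Y ∪ (X \ Y) = X := Finset.union_sdiff_of_subset h
  have h2 : (X \ Y).card = X.card - Y.card := Finset.card_sdiff_of_subset h
  calc cut G X = cut G (Y ∪ (X \ Y)) := by rw [h1]
    _ ≤ cut G Y + G.maxDegree * (X \ Y).card := cut_union_le_left G Y _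
    _ = _ := by rw [h2]

lemma cut_le_of_subset {Y X : Finset V} (h : Y ⊆ X) :
    cut G Y ≤ cut G X + G.maxDegree * (X.card - Y.card) := by
  have h1 : X \ (X \ Y) = Y := Finset.sdiff_sdiff_eq_self h
  have h2 : (X \ Y).card = X.card - Y.card := Finset.card_sdiff_of_subset h
  calc cut G Y = cut G (X \ (X \ Y)) := by rw [h1]
    _ ≤ cut G X + G.maxDegree * (X \ Y).card := cut_sdiff_le G X _
    _ = _ := by rw [h2]

lemma cut_eq_sum (X : Finset V) :
    cut G X = ∑ p ∈ (univ : Finset V) ×ˢ (univ : Finset V),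
      if G.Adj p.1 p.2 ∧ p.1 ∈ X ∧ p.2 ∉ X then 1 else 0 := by
  rw [cut]
  have : (X ×ˢ Xᶜ).filter (fun p => G.Adj p.1 p.2) =
      ((univ : Finset V) ×ˢ (univ : Finset V)).filter
        (fun p => G.Adj p.1 p.2 ∧ p.1 ∈ X ∧ p.2 ∉ X) := by
    ext p
    simp only [mem_filter, mem_product, mem_compl, mem_univ, true_and]
    tauto
  rw [this, Finset.card_filter]

lemma cut_submod (X Y : Finset V) :
    cut G (X ∩ Y) + cut G (X ∪ Y) ≤ cut G X + cut G Y := by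
  rw [cut_eq_sum, cut_eq_sum, cut_eq_sum, cut_eq_sum, ← Finset.sum_add_distrib,
    ← Finset.sum_add_distrib]
  refine Finset.sum_le_sum fun p _ => ?_
  by_cases ha : G.Adj p.1 p.2 <;>
    by_cases h1 : p.1 ∈ X <;> by_cases h2 : p.1 ∈ Y <;>
    by_cases h3 : p.2 ∈ X <;> by_cases h4 : p.2 ∈ Y <;>
    simp [ha, h1, h2, h3, h4, Finset.mem_inter, Finset.mem_union]

end helpers

section crusades

set_option linter.unusedSectionVars false

variable (G : SimpleGraph V) [DecidableRel G.Adj]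

lemma exists_chain (S : Finset V) : ∀ (N : ℕ) (T : Finset V), (T \ S).card = N → S ⊆ T →
    ∃ (m : ℕ) (D : ℕ → Finset V), D 0 = T ∧ D m = S ∧
      (∀ i < m, D (i + 1) ⊆ D i ∧ (D i \ D (i + 1)).card ≤ 1) ∧
      (∀ i ≤ m, S ⊆ D i ∧ D i ⊆ T) := by
  intro N
  induction N with
  | zero =>
    intro T hc hsub
    have hTS : T = S :=
      Finset.Subset.antisymm (Finset.sdiff_eq_empty_iff_subset.mp (Finset.card_eq_zero.mp hc)) hsub
    subst hTS
    exact ⟨0, fun _ => T, rfl, rfl, fun i hi => absurd hi (by omega),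
      fun i _ => ⟨Finset.Subset.refl _, Finset.Subset.refl _⟩⟩
  | succ N ih =>
    intro T hc hsub
    have hne : (T \ S).Nonempty := by rw [← Finset.card_pos, hc]; omega
    obtain ⟨a, ha⟩ := hne
    have haT : a ∈ T := (Finset.mem_sdiff.mp ha).1
    have haS : a ∉ S := (Finset.mem_sdiff.mp ha).2
    have hsub' : S ⊆ T.erase a := fun x hx =>
      Finset.mem_erase.mpr ⟨fun h => haS (h ▸ hx), hsub hx⟩
    have hc' : (T.erase a \ S).card = N := by
      have he : T.erase a \ S = (T \ S).erase a := by
        ext x; simp only [Finset.mem_erase, Finset.mem_sdiff]; tauto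
      rw [he, Finset.card_erase_of_mem ha, hc]
      omega
    obtain ⟨m, D, hD0, hDm, hstep, hsand⟩ := ih (T.erase a) hc' hsub'
    refine ⟨m + 1, fun i => if i = 0 then T else D (i - 1), by simp, ?_, ?_, ?_⟩
    · simp only [if_neg (Nat.succ_ne_zero m), Nat.add_sub_cancel]
      exact hDm
    · intro i hi
      by_cases h0 : i = 0
      · subst h0
        simp only [if_pos rfl, if_neg (by omega : (1 : ℕ) ≠ 0)]
        have h1 : D (1 - 1) = T.erase a := hD0
        rw [h1]
        constructor
        · exact Finset.erase_subset a T
        · have hs2 : T \ T.erase a ⊆ {a} := by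
            intro x hx
            simp only [Finset.mem_sdiff, Finset.mem_erase] at hx
            have : x = a := by tauto
            simp [this]
          exact le_trans (Finset.card_le_card hs2) (by simp)
      · have h1 : i - 1 < m := by omega
        simp only [if_neg h0, if_neg (by omega : i + 1 ≠ 0)]
        have e1 : i + 1 - 1 = (i - 1) + 1 := by omega
        rw [e1]
        exact hstep (i - 1) h1
    · intro i hi
      by_cases h0 : i = 0
      · subst h0; simp only [if_pos rfl]
        exact ⟨hsub, Finset.Subset.refl _⟩
      · simp only [if_neg h0]
        have := hsand (i - 1) (by omega)
        exact ⟨this.1, le_trans this.2 (Finset.erase_subset a T)⟩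

lemma exists_crusade (A : Finset V) : ∃ k ω, IsCrusade A ∅ k ω := by
  obtain ⟨m, D, hD0, hDm, hstep, _⟩ :=
    exists_chain (∅ : Finset V) (A \ ∅).card A rfl (Finset.empty_subset A)
  exact ⟨m, D, hD0, hDm, fun i hi => (hstep i hi).2⟩

lemma resilience_spec (A : Finset V) :
    ∃ k ω, IsCrusade A ∅ k ω ∧ width G k ω = resilience G A := by
  obtain ⟨k, ω, h⟩ := exists_crusade A
  have : resilience G A ∈ {w | ∃ (k : ℕ) (ω : ℕ → Finset V), IsCrusade A ∅ k ω ∧ width G k ω = w} :=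
    Nat.sInf_mem ⟨width G k ω, k, ω, h, rfl⟩
  obtain ⟨k', ω', h', hw⟩ := this
  exact ⟨k', ω', h', hw⟩

lemma resilience_le_width {A : Finset V} {k : ℕ} {ω : ℕ → Finset V} (h : IsCrusade A ∅ k ω) :
    resilience G A ≤ width G k ω :=
  Nat.sInf_le ⟨k, ω, h, rfl⟩

lemma cut_le_width {k : ℕ} {ω : ℕ → Finset V} {j : ℕ} (h1 : 1 ≤ j) (h2 : j ≤ k) :
    cut G (ω j) ≤ width G k ω :=
  Finset.le_sup (f := fun i => cut G (ω i)) (Finset.mem_Icc.mpr ⟨h1, h2⟩)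

lemma resilience_suffix {A : Finset V} {k : ℕ} {ω : ℕ → Finset V} (h : IsCrusade A ∅ k ω)
    {j : ℕ} (hj : j ≤ k) : resilience G (ω j) ≤ width G k ω := by
  refine le_trans (resilience_le_width G (A := ω j) (k := k - j) (ω := fun i => ω (j + i)) ?_) ?_
  · refine ⟨rfl, ?_, ?_⟩
    · show ω (j + (k - j)) = ∅
      have e : j + (k - j) = k := by omega
      rw [e, h.2.1]
    · intro i hi
      show ((ω (j + i)) \ (ω (j + (i + 1)))).card ≤ 1
      have e : j + (i + 1) = (j + i) + 1 := by omega
      rw [e]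
      exact h.2.2 (j + i) (by omega)
  · refine Finset.sup_le fun i hi => ?_
    rw [Finset.mem_Icc] at hi
    exact cut_le_width G (by omega) (by omega)

lemma resilience_zero_of_card_le_one {X : Finset V} (h : X.card ≤ 1) : resilience G X = 0 := by
  refine Nat.le_antisymm ?_ (Nat.zero_le _)
  refine le_trans (resilience_le_width G (k := 1) (ω := fun i => if i = 0 then X else ∅) ?_) ?_
  · refine ⟨rfl, rfl, fun i hi => ?_⟩
    have : i = 0 := by omega
    subst this
    simpa using h
  · refine Finset.sup_le fun i hi => ?_
    rw [Finset.mem_Icc] at hi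
    have : i = 1 := by omega
    subst this
    simp [cut_empty]

lemma resilience_le_add_maxDegree {X Y : Finset V} (h : (X \ Y).card ≤ 1) :
    resilience G X ≤ resilience G Y + G.maxDegree := by
  obtain ⟨m, σ, hσ, hw⟩ := resilience_spec G Y
  rcases Nat.eq_zero_or_pos m with hm | hm
  · -- Y = ∅, so X has at most one element
    subst hm
    have hY : Y = ∅ := hσ.1.symm.trans hσ.2.1
    have hX : X.card ≤ 1 := by
      have : X \ Y = X := by rw [hY, Finset.sdiff_empty]
      rwa [this] at h
    rw [resilience_zero_of_card_le_one G hX]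
    exact Nat.zero_le _
  · set e := X \ Y with he
    refine le_trans (resilience_le_width G (k := m + 1)
      (ω := fun j => if j = 0 then X else if j ≤ m then σ j ∪ e else ∅) ?_) ?_
    · refine ⟨rfl, by simp only [if_neg (by omega : m + 1 ≠ 0), if_neg (by omega : ¬ m + 1 ≤ m)], ?_⟩
      intro i hi
      by_cases h0 : i = 0
      · subst h0
        simp only [if_pos rfl, if_neg (by omega : (1 : ℕ) ≠ 0), if_pos (by omega : 1 ≤ m)]
        refine le_trans (Finset.card_le_card (fun x hx => ?_)) ((hσ.2.2) 0 hm)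
        simp only [Finset.mem_sdiff, Finset.mem_union, he] at hx ⊢
        push_neg at hx
        rw [hσ.1]
        exact ⟨by tauto, hx.2.1⟩
      · by_cases hlast : i = m
        · simp only [if_neg h0, if_pos (by omega : i ≤ m), if_neg (by omega : i + 1 ≠ 0),
            if_neg (by omega : ¬ i + 1 ≤ m)]
          have hσm : σ i = ∅ := by rw [hlast]; exact hσ.2.1
          rw [hσm, Finset.empty_union, Finset.sdiff_empty]
          exact h
        · have him : i < m := by omega
          simp only [if_neg h0, if_pos (by omega : i ≤ m), if_neg (by omega : i + 1 ≠ 0),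
            if_pos (by omega : i + 1 ≤ m)]
          refine le_trans (Finset.card_le_card (fun x hx => ?_)) (hσ.2.2 i him)
          simp only [Finset.mem_sdiff, Finset.mem_union] at hx ⊢
          tauto
    · refine Finset.sup_le fun j hj => ?_
      rw [Finset.mem_Icc] at hj
      by_cases hjm : j ≤ m
      · simp only [if_neg (by omega : j ≠ 0), if_pos hjm]
        calc cut G (σ j ∪ e) ≤ cut G (σ j) + G.maxDegree * e.card := cut_union_le_left G _ _
          _ ≤ width G m σ + G.maxDegree * 1 := by
              refine Nat.add_le_add (cut_le_width G (by omega) hjm) (Nat.mul_le_mul_left _ h)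
          _ = resilience G Y + G.maxDegree := by rw [hw, Nat.mul_one]
      · simp only [if_neg (by omega : j ≠ 0), if_neg hjm, cut_empty]
        exact Nat.zero_le _

lemma exists_adj_of_connected (hconn : G.Connected) (hcard : 1 < Fintype.card V) (u : V) :
    ∃ v, G.Adj u v := by
  obtain ⟨w, hw⟩ := Fintype.exists_ne_of_one_lt_card hcard u
  obtain ⟨p⟩ := hconn.preconnected u w
  exact ⟨_, p.adj_snd (SimpleGraph.Walk.not_nil_of_ne (Ne.symm hw))⟩

lemma one_lt_card_of_maxDegree_pos (h : 0 < G.maxDegree) : 1 < Fintype.card V := by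
  by_contra hcon
  have : ∀ v, G.degree v ≤ 0 := by
    intro v
    by_contra hd
    obtain ⟨w, hw⟩ := (G.degree_pos_iff_exists_adj v).mp (by omega)
    exact hcon (Fintype.one_lt_card_iff.mpr ⟨v, w, G.ne_of_adj hw⟩)
  have := G.maxDegree_le_of_forall_degree_le 0 this
  omega

lemma one_le_cut_singleton (hconn : G.Connected) (hcard : 1 < Fintype.card V) (u : V) :
    1 ≤ cut G {u} := by
  obtain ⟨v, hv⟩ := exists_adj_of_connected G hconn hcard u
  refine Finset.card_pos.mpr ⟨(u, v), Finset.mem_filter.mpr ⟨Finset.mem_product.mpr ⟨?_, ?_⟩, hv⟩⟩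
  · exact Finset.mem_singleton_self u
  · refine Finset.mem_compl.mpr fun hvv => ?_
    exact (G.ne_of_adj hv) (Finset.mem_singleton.mp hvv).symm

lemma card_le_one_of_resilience_zero (hconn : G.Connected) (hcard : 1 < Fintype.card V)
    {X : Finset V} (h : resilience G X = 0) : X.card ≤ 1 := by
  by_contra hX
  obtain ⟨k, ω, hcr, hw⟩ := resilience_spec G X
  -- largest index with bag of size ≥ 2
  set S := (Finset.range (k + 1)).filter (fun i => 2 ≤ (ω i).card) with hS
  have h0S : 0 ∈ S := by
    simp only [hS, Finset.mem_filter, Finset.mem_range]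
    exact ⟨by omega, by rw [hcr.1]; omega⟩
  have hSne : S.Nonempty := ⟨0, h0S⟩
  set j := S.max' hSne with hj
  have hjS : j ∈ S := S.max'_mem hSne
  have hjk : j ≤ k ∧ 2 ≤ (ω j).card := by
    have := hjS
    simp only [hS, Finset.mem_filter, Finset.mem_range] at this
    exact ⟨by omega, this.2⟩
  have hjlt : j < k := by
    rcases Nat.lt_or_ge j k with h' | h'
    · exact h'
    · exfalso
      have : j = k := by omega
      rw [this, hcr.2.1] at hjk
      simp at hjk
  have hnext : (ω (j + 1)).card ≤ 1 := by
    by_contra hc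
    have : j + 1 ∈ S := by
      simp only [hS, Finset.mem_filter, Finset.mem_range]
      exact ⟨by omega, by omega⟩
    have := S.le_max' _ this
    omega
  have hcard1 : (ω (j + 1)).card = 1 := by
    have hstep := hcr.2.2 j hjlt
    have : (ω j).card ≤ (ω j \ ω (j + 1)).card + (ω (j + 1)).card := by
      calc (ω j).card ≤ ((ω j \ ω (j + 1)) ∪ ω (j + 1)).card := by
            refine Finset.card_le_card fun x hx => ?_
            simp only [Finset.mem_union, Finset.mem_sdiff]
            by_cases hxx : x ∈ ω (j + 1) <;> tauto
        _ ≤ _ := Finset.card_union_le _ _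
    omega
  obtain ⟨u, hu⟩ := Finset.card_eq_one.mp hcard1
  have : 1 ≤ cut G (ω (j + 1)) := by rw [hu]; exact one_le_cut_singleton G hconn hcard u
  have : cut G (ω (j + 1)) ≤ width G k ω := cut_le_width G (by omega) (by omega)
  omega

end crusades
section monot

set_option linter.unusedSectionVars false
set_option maxHeartbeats 1000000

variable (G : SimpleGraph V) [DecidableRel G.Adj]

lemma sum_lt_sum_of_update {f f' : ℕ → ℕ} (s : Finset ℕ) (idx : ℕ) (h : idx ∈ s)
    (hagree : ∀ j ∈ s, j ≠ idx → f' j = f j) (hlt : f' idx < f idx) :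
    ∑ j ∈ s, f' j < ∑ j ∈ s, f j := by
  rw [← Finset.add_sum_erase s f' h, ← Finset.add_sum_erase s f h]
  have he : ∑ j ∈ s.erase idx, f' j = ∑ j ∈ s.erase idx, f j :=
    Finset.sum_congr rfl fun j hj =>
      hagree j (Finset.mem_of_mem_erase hj) (Finset.ne_of_mem_erase hj)
  omega

lemma exists_nice_crusade (A : Finset V) (hA : A.Nonempty) :
    ∃ K ω, IsCrusade A ∅ K ω ∧ width G K ω = resilience G A ∧
      (∀ i < K, ω (i + 1) ≠ ω i) ∧
      (∀ i, 1 ≤ i → i + 1 ≤ K → ω (i + 1) ⊆ ω i) := by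
  classical
  set n := Fintype.card V with hn
  set g := resilience G A with hg
  obtain ⟨k₁, ω₁, hcr₁, hw₁⟩ := resilience_spec G A
  have hKne : {k | ∃ ω, IsCrusade A ∅ k ω ∧ width G k ω ≤ g}.Nonempty :=
    ⟨k₁, ω₁, hcr₁, le_of_eq hw₁⟩
  set K := sInf {k | ∃ ω, IsCrusade A ∅ k ω ∧ width G k ω ≤ g} with hK
  obtain ⟨ω₂, hcr₂, hw₂⟩ := Nat.sInf_mem hKne
  have hKmin : ∀ k', (∃ ω', IsCrusade A ∅ k' ω' ∧ width G k' ω' ≤ g) → K ≤ k' :=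
    fun k' h => Nat.sInf_le h
  set Φ : (ℕ → Finset V) → ℕ :=
    fun σ => ∑ j ∈ Finset.range (K + 1), ((n + 1) * cut G (σ j) + (σ j).card) with hΦdef
  have hTne : {t | ∃ σ, IsCrusade A ∅ K σ ∧ width G K σ ≤ g ∧ Φ σ = t}.Nonempty :=
    ⟨Φ ω₂, ω₂, hcr₂, hw₂, rfl⟩
  obtain ⟨ω, hcr, hwle, hΦω⟩ := Nat.sInf_mem hTne
  have hΦmin : ∀ σ, IsCrusade A ∅ K σ → width G K σ ≤ g → Φ ω ≤ Φ σ := by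
    intro σ h1 h2
    rw [hΦω]
    exact Nat.sInf_le ⟨σ, h1, h2, rfl⟩
  have hK1 : 1 ≤ K := by
    rcases Nat.eq_zero_or_pos K with h | h
    · exfalso
      have : A = (∅ : Finset V) := by rw [← hcr.1, ← hcr.2.1, h]
      exact hA.ne_empty this
    · exact h
  -- no lazy steps
  have claim1 : ∀ i < K, ω (i + 1) ≠ ω i := by
    intro i hi heq
    set ω' : ℕ → Finset V := fun j => if j ≤ i then ω j else ω (j + 1) with hω'
    have hcr' : IsCrusade A ∅ (K - 1) ω' := by
      refine ⟨?_, ?_, ?_⟩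
      · show (if 0 ≤ i then ω 0 else ω 1) = A
        rw [if_pos (Nat.zero_le i), hcr.1]
      · show (if K - 1 ≤ i then ω (K - 1) else ω (K - 1 + 1)) = ∅
        by_cases hc : K - 1 ≤ i
        · rw [if_pos hc]
          have hieq : i = K - 1 := by omega
          have e2 : i + 1 = K := by omega
          rw [← hieq, ← heq, e2]
          exact hcr.2.1
        · rw [if_neg hc]
          have e2 : K - 1 + 1 = K := by omega
          rw [e2, hcr.2.1]
      · intro j hj
        by_cases h1 : j + 1 ≤ i
        · show ((if j ≤ i then ω j else ω (j + 1)) \ (if j + 1 ≤ i then ω (j + 1) else ω (j + 2))).card ≤ 1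
          rw [if_pos (by omega : j ≤ i), if_pos h1]
          exact hcr.2.2 j (by omega)
        · by_cases h2 : j ≤ i
          · show ((if j ≤ i then ω j else ω (j + 1)) \ (if j + 1 ≤ i then ω (j + 1) else ω (j + 2))).card ≤ 1
            rw [if_pos h2, if_neg h1]
            have : j = i := by omega
            subst this
            rw [← heq]
            exact hcr.2.2 (j + 1) (by omega)
          · show ((if j ≤ i then ω j else ω (j + 1)) \ (if j + 1 ≤ i then ω (j + 1) else ω (j + 2))).card ≤ 1
            rw [if_neg h2, if_neg h1]
            exact hcr.2.2 (j + 1) (by omega)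
    have hw' : width G (K - 1) ω' ≤ g := by
      refine Finset.sup_le fun j hj => ?_
      rw [Finset.mem_Icc] at hj
      show cut G (if j ≤ i then ω j else ω (j + 1)) ≤ g
      by_cases h2 : j ≤ i
      · rw [if_pos h2]
        exact le_trans (cut_le_width G (by omega) (by omega)) hwle
      · rw [if_neg h2]
        exact le_trans (cut_le_width G (by omega) (by omega)) hwle
    have := hKmin (K - 1) ⟨ω', hcr', hw'⟩
    omega
  -- monotone from step 1
  have claim2 : ∀ i, 1 ≤ i → i + 1 ≤ K → ω (i + 1) ⊆ ω i := by
    intro i h1 h2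
    by_contra hns
    obtain ⟨x, hx1, hx2⟩ := Finset.not_subset.mp hns
    have hne : ω (i + 1) ≠ ∅ := fun h => by rw [h] at hx1; exact absurd hx1 (Finset.notMem_empty x)
    have hiK : i + 1 < K := by
      rcases Nat.lt_or_ge (i + 1) K with h | h
      · exact h
      · exfalso
        have : i + 1 = K := by omega
        exact hne (this ▸ hcr.2.1)
    have hsubmod := cut_submod G (ω i) (ω (i + 1))
    by_cases hc : cut G (ω i ∩ ω (i + 1)) ≤ cut G (ω (i + 1))
    · -- replace ω (i+1) by the intersection
      set P := ω i ∩ ω (i + 1) with hP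
      set ω' : ℕ → Finset V := fun j => if j = i + 1 then P else ω j with hω'
      have hagree : ∀ j, j ≠ i + 1 → ω' j = ω j := fun j hj => if_neg hj
      have hself : ω' (i + 1) = P := if_pos rfl
      have hcr' : IsCrusade A ∅ K ω' := by
        refine ⟨?_, ?_, ?_⟩
        · rw [hagree 0 (by omega), hcr.1]
        · rw [hagree K (by omega), hcr.2.1]
        · intro j hj
          by_cases hji : j = i
          · rw [hagree j (by omega), show j + 1 = i + 1 from by omega, hself, hji,
              Finset.sdiff_inter_self_left]
            exact hcr.2.2 i (by omega)
          · by_cases hji1 : j = i + 1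
            · rw [hji1, hself, hagree (i + 1 + 1) (by omega)]
              refine le_trans (Finset.card_le_card fun y hy => ?_) (hcr.2.2 (i + 1) (by omega))
              simp only [Finset.mem_sdiff, hP, Finset.mem_inter] at hy ⊢
              tauto
            · rw [hagree j hji1, hagree (j + 1) (by omega)]
              exact hcr.2.2 j hj
      have hw' : width G K ω' ≤ g := by
        refine Finset.sup_le fun j hj => ?_
        rw [Finset.mem_Icc] at hj
        by_cases hji1 : j = i + 1
        · subst hji1
          rw [hself]
          exact le_trans hc (le_trans (cut_le_width G (by omega) (by omega)) hwle)
        · rw [hagree j hji1]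
          exact le_trans (cut_le_width G (by omega) (by omega)) hwle
      have hlt : Φ ω' < Φ ω := by
        refine sum_lt_sum_of_update _ (i + 1) (by simp only [Finset.mem_range]; omega)
          (fun j _ hj => by rw [hagree j hj]) ?_
        have hPcard : P.card < (ω (i + 1)).card := by
          refine Finset.card_lt_card ?_
          rw [Finset.ssubset_iff_of_subset Finset.inter_subset_right]
          exact ⟨x, hx1, fun hxP => hx2 (Finset.mem_inter.mp hxP).1⟩
        have h3 : (n + 1) * cut G (ω' (i + 1)) ≤ (n + 1) * cut G (ω (i + 1)) := by
          rw [hself]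
          exact Nat.mul_le_mul_left _ hc
        have h4 : (ω' (i + 1)).card < (ω (i + 1)).card := by rw [hself]; exact hPcard
        omega
      have := hΦmin ω' hcr' hw'
      omega
    · -- replace ω i by the union
      push_neg at hc
      have hU : cut G (ω i ∪ ω (i + 1)) < cut G (ω i) := by omega
      set U := ω i ∪ ω (i + 1) with hUU
      set ω' : ℕ → Finset V := fun j => if j = i then U else ω j with hω'
      have hagree : ∀ j, j ≠ i → ω' j = ω j := fun j hj => if_neg hj
      have hself : ω' i = U := if_pos rfl
      have hcr' : IsCrusade A ∅ K ω' := by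
        refine ⟨?_, ?_, ?_⟩
        · rw [hagree 0 (by omega), hcr.1]
        · rw [hagree K (by omega), hcr.2.1]
        · intro j hj
          by_cases hji : j + 1 = i
          · have e : (ω j \ U) ⊆ (ω j \ ω i) := by
              intro y hy
              simp only [Finset.mem_sdiff, hUU, Finset.mem_union] at hy ⊢
              exact ⟨hy.1, fun h => hy.2 (Or.inl h)⟩
            rw [hagree j (by omega), hji, hself]
            refine le_trans (Finset.card_le_card e) ?_
            rw [← hji]
            exact hcr.2.2 j (by omega)
          · by_cases hji2 : j = i
            · subst hji2
              rw [hself, hagree (j + 1) (by omega)]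
              have : U \ ω (j + 1) = ω j \ ω (j + 1) := by
                ext y
                simp only [Finset.mem_sdiff, hUU, Finset.mem_union]
                tauto
              rw [this]
              exact hcr.2.2 j hj
            · rw [hagree j hji2, hagree (j + 1) (by omega)]
              exact hcr.2.2 j hj
      have hw' : width G K ω' ≤ g := by
        refine Finset.sup_le fun j hj => ?_
        rw [Finset.mem_Icc] at hj
        by_cases hji : j = i
        · subst hji
          rw [hself]
          exact le_trans (le_of_lt hU) (le_trans (cut_le_width G (by omega) (by omega)) hwle)
        · rw [hagree j hji]
          exact le_trans (cut_le_width G (by omega) (by omega)) hwle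
      have hlt : Φ ω' < Φ ω := by
        refine sum_lt_sum_of_update _ i (by simp only [Finset.mem_range]; omega)
          (fun j _ hj => by rw [hagree j hj]) ?_
        have hUcard : U.card ≤ n := by
          rw [hn, ← Finset.card_univ]
          exact Finset.card_le_univ U
        rw [hself]
        calc (n + 1) * cut G U + U.card < (n + 1) * cut G U + (n + 1) := by omega
          _ = (n + 1) * (cut G U + 1) := by ring
          _ ≤ (n + 1) * cut G (ω i) := Nat.mul_le_mul_left _ (by omega)
          _ ≤ (n + 1) * cut G (ω i) + (ω i).card := Nat.le_add_right _ _
      have := hΦmin ω' hcr' hw'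
      omega
  exact ⟨K, ω, hcr, le_antisymm hwle (resilience_le_width G hcr), claim1, claim2⟩

end monot

set_option maxHeartbeats 1600000 in
theorem exists_good_optimal_crusade (G : SimpleGraph V) [DecidableRel G.Adj]
    (hconn : G.Connected) (hΔ : 0 < G.maxDegree)
    (hW : G.maxDegree ≤ cutWidth G)
    (A : Finset V) (hA : A.Nonempty)
    (h0 : 0 < resilience G A) (hlt : resilience G A < cutWidth G) :
    ∃ (k : ℕ) (ω : ℕ → Finset V),
      IsCrusade A ∅ k ω ∧
      width G k ω = resilience G A ∧
      -- (i) consecutive bags are distinct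
      (∀ i < k, ω (i + 1) ≠ ω i) ∧
      -- (ii) strictly monotone after the first step
      (∀ i, 1 ≤ i → i < k → ω (i + 1) ⊂ ω i) ∧
      -- (iii) resilience never exceeds that of A
      (∀ i ≤ k, resilience G (ω i) ≤ resilience G A) ∧
      -- (iv) γ(ω₁) ≥ γ(A) − Δ
      resilience G A ≤ resilience G (ω 1) + G.maxDegree ∧
      -- (v) c(A) ≥ c(ω₁) − Δ(E + 2), i.e. c(A) + (n+4)Δ ≥ c(ω₁) + 2W
      cut G (ω 1) + 2 * cutWidth G ≤
        cut G A + (Fintype.card V + 4) * G.maxDegree ∧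
      -- (vi) an improvement bag is encountered
      (∃ l ≤ k, ∃ v ∈ ω l, resilience G ((ω l).erase v) < resilience G (ω l)) := by
  classical
  obtain ⟨K, ω, hcr, hwidth, hne, hmono⟩ := exists_nice_crusade G A hA
  have hwle : width G K ω ≤ resilience G A := le_of_eq hwidth
  have hK1 : 1 ≤ K := by
    rcases Nat.eq_zero_or_pos K with h | h
    · exfalso; exact hA.ne_empty (by rw [← hcr.1, ← hcr.2.1, h])
    · exact h
  have hcard2 : 1 < Fintype.card V := one_lt_card_of_maxDegree_pos G hΔ
  have hstep0 : (A \ ω 1).card ≤ 1 := by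
    have := hcr.2.2 0 (by omega)
    rwa [hcr.1] at this
  refine ⟨K, ω, hcr, hwidth, hne, ?_, ?_, ?_, ?_, ?_⟩
  · -- (ii)
    intro i h1 h2
    exact Finset.ssubset_iff_subset_ne.mpr ⟨hmono i h1 (by omega), hne i h2⟩
  · -- (iii)
    intro i hi
    exact le_trans (resilience_suffix G hcr hi) hwle
  · -- (iv)
    exact resilience_le_add_maxDegree G hstep0
  · -- (v)
    set n := Fintype.card V with hn
    set Δ := G.maxDegree with hΔdef
    set B := ω 1 with hB
    have hcB : cut G B ≤ resilience G A := le_trans (cut_le_width G le_rfl hK1) hwle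
    have hABsub : B ⊆ A ∪ B := Finset.subset_union_right
    obtain ⟨m, D, hD0, hDm, hDstep, hDsand⟩ :=
      exists_chain (A ∪ B) ((univ : Finset V) \ (A ∪ B)).card univ rfl (Finset.subset_univ _)
    set ρ : ℕ → Finset V := fun i => if i ≤ m then D i else ω (i - m) with hρ
    have hρD : ∀ i ≤ m, ρ i = D i := fun i hi => if_pos hi
    have hρω : ∀ i, m < i → ρ i = ω (i - m) := fun i hi => if_neg (by omega)
    have hρcr : IsCrusade univ ∅ (m + K) ρ := by
      refine ⟨?_, ?_, ?_⟩
      · rw [hρD 0 (Nat.zero_le m), hD0]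
      · rw [hρω (m + K) (by omega), show m + K - m = K from by omega, hcr.2.1]
      · intro i hi
        rcases Nat.lt_trichotomy i m with h | h | h
        · rw [hρD i (by omega), hρD (i + 1) (by omega)]
          exact (hDstep i h).2
        · subst h
          rw [hρD i le_rfl, hρω (i + 1) (by omega), show i + 1 - i = 1 from by omega, hDm]
          refine le_trans (Finset.card_le_card fun y hy => ?_) hstep0
          simp only [Finset.mem_sdiff, Finset.mem_union, hB] at hy ⊢
          tauto
        · rw [hρω i (by omega), hρω (i + 1) (by omega),
            show i + 1 - m = (i - m) + 1 from by omega]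
          exact hcr.2.2 (i - m) (by omega)
    have hρmono : IsMonotone (m + K) ρ := by
      intro i hi
      rcases Nat.lt_trichotomy i m with h | h | h
      · rw [hρD i (by omega), hρD (i + 1) (by omega)]
        exact (hDstep i h).1
      · subst h
        rw [hρD i le_rfl, hρω (i + 1) (by omega), show i + 1 - i = 1 from by omega, hDm]
        exact hABsub
      · rw [hρω i (by omega), hρω (i + 1) (by omega),
          show i + 1 - m = (i - m) + 1 from by omega]
        exact hmono (i - m) (by omega) (by omega)
    have hWle : cutWidth G ≤ width G (m + K) ρ :=
      Nat.sInf_le ⟨m + K, ρ, hρcr, hρmono, rfl⟩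
    obtain ⟨i₀, hi₀mem, hi₀⟩ := Finset.exists_mem_eq_sup (Finset.Icc 1 (m + K))
      ⟨1, Finset.mem_Icc.mpr ⟨le_rfl, by omega⟩⟩ (fun i => cut G (ρ i))
    rw [Finset.mem_Icc] at hi₀mem
    have hWcut : cutWidth G ≤ cut G (ρ i₀) := le_trans hWle (le_of_eq hi₀)
    have key : 2 * cutWidth G ≤ cut G (A ∪ B) + Δ * (n - (A ∪ B).card) := by
      rcases le_or_gt i₀ m with hcase | hcase
      · have hsand := hDsand i₀ hcase
        have hsc : (A ∪ B).card ≤ (D i₀).card := Finset.card_le_card hsand.1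
        have hdn : (D i₀).card ≤ n := by rw [hn, ← Finset.card_univ]; exact Finset.card_le_univ _
        have h1 : cut G (D i₀) ≤ cut G (A ∪ B) + Δ * ((D i₀).card - (A ∪ B).card) :=
          cut_le_of_superset G hsand.1
        have h2 : cut G (D i₀) ≤ Δ * (n - (D i₀).card) := by
          refine le_trans (cut_le_mul_card_compl G _) ?_
          rw [Finset.card_compl]
        have hwρ : cutWidth G ≤ cut G (D i₀) := by
          rwa [hρD i₀ hcase] at hWcut
        have e1 : Δ * ((D i₀).card - (A ∪ B).card) + Δ * (n - (D i₀).card)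
            = Δ * (n - (A ∪ B).card) := by
          rw [← Nat.mul_add]
          congr 1
          omega
        calc 2 * cutWidth G = cutWidth G + cutWidth G := by omega
          _ ≤ cut G (D i₀) + cut G (D i₀) := Nat.add_le_add hwρ hwρ
          _ ≤ (cut G (A ∪ B) + Δ * ((D i₀).card - (A ∪ B).card)) + Δ * (n - (D i₀).card) :=
              Nat.add_le_add h1 h2
          _ = cut G (A ∪ B) + Δ * (n - (A ∪ B).card) := by rw [Nat.add_assoc, e1]
      · exfalso
        have hcut : cut G (ρ i₀) ≤ resilience G A := by
          rw [hρω i₀ hcase]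
          exact le_trans (cut_le_width G (by omega) (by omega)) hwle
        have := le_trans hWcut hcut
        omega
    have hv1 : 2 * resilience G A ≤ cut G A + Δ * A.card := by
      obtain ⟨m', D', hD0', hDm', hDstep', hDsand'⟩ :=
        exists_chain (∅ : Finset V) (A \ ∅).card A rfl (Finset.empty_subset A)
      have hcr' : IsCrusade A ∅ m' D' := ⟨hD0', hDm', fun i hi => (hDstep' i hi).2⟩
      have hm1 : 1 ≤ m' := by
        rcases Nat.eq_zero_or_pos m' with h | h
        · exfalso; exact hA.ne_empty (by rw [← hD0', ← hDm', h])
        · exact h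
      have hgw : resilience G A ≤ width G m' D' := resilience_le_width G hcr'
      obtain ⟨i₁, hi₁mem, hi₁⟩ := Finset.exists_mem_eq_sup (Finset.Icc 1 m')
        ⟨1, Finset.mem_Icc.mpr ⟨le_rfl, hm1⟩⟩ (fun i => cut G (D' i))
      rw [Finset.mem_Icc] at hi₁mem
      have hgc : resilience G A ≤ cut G (D' i₁) := le_trans hgw (le_of_eq hi₁)
      have hsand := hDsand' i₁ hi₁mem.2
      have hsc : (D' i₁).card ≤ A.card := Finset.card_le_card hsand.2
      have h1 : cut G (D' i₁) ≤ cut G A + Δ * (A.card - (D' i₁).card) :=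
        cut_le_of_subset G hsand.2
      have h2 : cut G (D' i₁) ≤ Δ * (D' i₁).card := cut_le_mul_card G _
      have e1 : Δ * (A.card - (D' i₁).card) + Δ * (D' i₁).card = Δ * A.card := by
        rw [← Nat.mul_add]; congr 1; omega
      calc 2 * resilience G A = resilience G A + resilience G A := by omega
        _ ≤ cut G (D' i₁) + cut G (D' i₁) := Nat.add_le_add hgc hgc
        _ ≤ (cut G A + Δ * (A.card - (D' i₁).card)) + Δ * (D' i₁).card := Nat.add_le_add h1 h2
        _ = cut G A + Δ * A.card := by rw [Nat.add_assoc, e1]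
    have hABcard : (A ∪ B).card ≤ B.card + 1 := by
      have hsub : A ∪ B ⊆ B ∪ (A \ B) := by
        intro y hy
        simp only [Finset.mem_union, Finset.mem_sdiff] at hy ⊢
        tauto
      refine le_trans (Finset.card_le_card hsub) (le_trans (Finset.card_union_le _ _) ?_)
      have h1 : (A \ B).card ≤ 1 := hstep0
      omega
    have hAsub : A.card ≤ (A ∪ B).card := Finset.card_le_card Finset.subset_union_left
    have hABn : (A ∪ B).card ≤ n := by rw [hn, ← Finset.card_univ]; exact Finset.card_le_univ _
    have hAB1 : cut G (A ∪ B) ≤ cut G B + Δ := by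
      refine le_trans (cut_le_of_superset G hABsub) ?_
      have h1 : (A ∪ B).card - B.card ≤ 1 := by omega
      calc cut G B + Δ * ((A ∪ B).card - B.card) ≤ cut G B + Δ * 1 :=
            Nat.add_le_add_left (Nat.mul_le_mul_left _ h1) _
        _ = cut G B + Δ := by rw [Nat.mul_one]
    have hfin1 : Δ * A.card + Δ * (n - (A ∪ B).card) ≤ Δ * n := by
      rw [← Nat.mul_add]
      exact Nat.mul_le_mul_left _ (by omega)
    have h2cb : 2 * cut G B ≤ cut G A + Δ * A.card :=
      le_trans (Nat.mul_le_mul_left 2 hcB) hv1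
    have e2 : (n + 4) * Δ = Δ * n + 4 * Δ := by ring
    have e3 : Δ ≤ 4 * Δ := by omega
    linarith [key, hAB1, h2cb, hfin1]
  · -- (vi)
    set Svi := (Finset.range (K + 1)).filter (fun i => 0 < resilience G (ω i)) with hSvi
    have h0S : 0 ∈ Svi := by
      rw [hSvi, Finset.mem_filter, Finset.mem_range]
      exact ⟨by omega, by rw [hcr.1]; exact h0⟩
    have hSne : Svi.Nonempty := ⟨0, h0S⟩
    set l := Svi.max' hSne with hl
    have hlS : l ∈ Svi := Svi.max'_mem hSne
    rw [hSvi, Finset.mem_filter, Finset.mem_range] at hlS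
    have hlpos : 0 < resilience G (ω l) := hlS.2
    have hmaxS : ∀ j ∈ Svi, j ≤ l := fun j hj => Svi.le_max' j hj
    have hlltK : l < K := by
      rcases Nat.lt_or_ge l K with h | h
      · exact h
      · exfalso
        have hlK : l = K := by omega
        rw [hlK, hcr.2.1, resilience_zero_of_card_le_one G (by simp)] at hlpos
        omega
    have hnext : resilience G (ω (l + 1)) = 0 := by
      by_contra hc
      have hmem : l + 1 ∈ Svi := by
        rw [hSvi, Finset.mem_filter, Finset.mem_range]
        exact ⟨by omega, Nat.pos_of_ne_zero hc⟩
      have := hmaxS _ hmem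
      omega
    by_cases hl1 : 1 ≤ l
    · have hss : ω (l + 1) ⊂ ω l :=
        Finset.ssubset_iff_subset_ne.mpr ⟨hmono l hl1 (by omega), hne l hlltK⟩
      obtain ⟨v, hv1, hv2⟩ := Finset.exists_of_ssubset hss
      have hcard1 : (ω l \ ω (l + 1)).card ≤ 1 := hcr.2.2 l hlltK
      have herase : (ω l).erase v = ω (l + 1) := by
        ext y
        simp only [Finset.mem_erase]
        constructor
        · rintro ⟨hyv, hyl⟩
          by_contra hyn
          have hy2 : y ∈ ω l \ ω (l + 1) := Finset.mem_sdiff.mpr ⟨hyl, hyn⟩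
          have hv3 : v ∈ ω l \ ω (l + 1) := Finset.mem_sdiff.mpr ⟨hv1, hv2⟩
          exact hyv (Finset.card_le_one.mp hcard1 y hy2 v hv3)
        · intro hy
          exact ⟨fun h => hv2 (h ▸ hy), hss.subset hy⟩
      exact ⟨l, hlltK.le, v, hv1, by rw [herase, hnext]; exact hlpos⟩
    · have h10 : resilience G (ω 1) = 0 := by
        by_contra hc
        have h1S : 1 ∈ Svi := by
          rw [hSvi, Finset.mem_filter, Finset.mem_range]
          exact ⟨by omega, Nat.pos_of_ne_zero hc⟩
        have := hmaxS 1 h1S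
        omega
      have hB1 : (ω 1).card ≤ 1 := card_le_one_of_resilience_zero G hconn hcard2 h10
      have hA2 : A.card ≤ 2 := by
        have hsub : A ⊆ (A \ ω 1) ∪ ω 1 := by
          intro y hy
          simp only [Finset.mem_union, Finset.mem_sdiff]
          tauto
        calc A.card ≤ ((A \ ω 1) ∪ ω 1).card := Finset.card_le_card hsub
          _ ≤ (A \ ω 1).card + (ω 1).card := Finset.card_union_le _ _
          _ ≤ 2 := by omega
      obtain ⟨v, hvA⟩ := hA
      refine ⟨0, Nat.zero_le K, v, by rw [hcr.1]; exact hvA, ?_⟩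
      rw [hcr.1]
      have hce : (A.erase v).card ≤ 1 := by
        rw [Finset.card_erase_of_mem hvA]
        omega
      rw [resilience_zero_of_card_le_one G hce]
      exact h0
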